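/- arXiv:math/0311170 — 2 statements merged into one kernel-verified Lean document; each statement's English description precedes it below -/
import Mathlib

section
/- Let G be a finite group. The chain relation ≈ on isomorphism classes of irreducible finite-dimensional complex representations of G — where D ≈ D' if and only if there exist finitely many irreducible representations D₁, …, Dₙ of G such that D and D' both occur in the tensor product D₁ ⊗ ⋯ ⊗ Dₙ — is an equivalence relation; in particular it is transitive. -/
/-!
Statement 0: For a finite group `G`, the chain relation on irreducible
finite-dimensional complex representations of `G` — where `D ≈ D'` iff there
exist finitely many irreducible representations `D₁, …, Dₙ` such that `D` and
`D'` both occur in `D₁ ⊗ ⋯ ⊗ Dₙ` — is an equivalence relation (in particular,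
transitive).
-/

open CategoryTheory MonoidalCategory

noncomputable section

variable {G : Type} [Group G]

/-- An irreducible representation `D` *occurs* in `T` if there is a nonzero
`G`-equivariant linear map from `D` to `T`. -/
def OccursIn (D T : FDRep ℂ G) : Prop := ∃ f : D ⟶ T, f ≠ 0

/-- The tensor product `D₁ ⊗ ⋯ ⊗ Dₙ` of a list of representations. -/
def tensorList : List (FDRep ℂ G) → FDRep ℂ G
  | [] => 𝟙_ (FDRep ℂ G)
  | X :: L => X ⊗ tensorList L

/-- Chain equivalence: `D ≈ D'` iff there is a nonempty finite chain
`D₁, …, Dₙ` of irreducible representations such that `D` and `D'` both occur in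
`D₁ ⊗ ⋯ ⊗ Dₙ`. -/
def ChainRel (D D' : FDRep ℂ G) : Prop :=
  ∃ L : List (FDRep ℂ G), L ≠ [] ∧ (∀ X ∈ L, Simple X) ∧
    OccursIn D (tensorList L) ∧ OccursIn D' (tensorList L)

/-- The type of irreducible finite-dimensional complex representations of `G`. -/
def IrrRep (G : Type) [Group G] := {V : FDRep ℂ G // Simple V}

namespace ChainAux

open Module

lemma hom_ne_zero_iff {A B : FDRep ℂ G} (f : A ⟶ B) : f ≠ 0 ↔ f.hom ≠ 0 := by
  constructor
  · intro h he; exact h (by ext1; simp [he])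
  · intro h he; exact h (by simp [he])

lemma comp_iso_ne_zero {A B C : FDRep ℂ G} {f : A ⟶ B} (e : B ≅ C) (hf : f ≠ 0) :
    f ≫ e.hom ≠ 0 := by
  intro h
  apply hf
  have := congrArg (· ≫ e.inv) h
  simpa using this

lemma iso_comp_ne_zero {A B C : FDRep ℂ G} {f : B ⟶ C} (e : A ≅ B) (hf : f ≠ 0) :
    e.hom ≫ f ≠ 0 := by
  intro h
  apply hf
  have := congrArg (e.inv ≫ ·) h
  simpa using this

lemma tensorHom_ne_zero {A B C D : FDRep ℂ G} {f : A ⟶ B} {g : C ⟶ D}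
    (hf : f ≠ 0) (hg : g ≠ 0) : f ⊗ₘ g ≠ 0 := by
  rw [hom_ne_zero_iff] at hf hg ⊢
  obtain ⟨x, hx⟩ : ∃ x, f.hom x ≠ 0 := by
    by_contra h
    push_neg at h
    exact hf (by ext x; exact h x)
  obtain ⟨y, hy⟩ : ∃ y, g.hom y ≠ 0 := by
    by_contra h
    push_neg at h
    exact hg (by ext y; exact h y)
  obtain ⟨φ, hφ⟩ : ∃ φ : Module.Dual ℂ B, φ (f.hom x) ≠ 0 := by
    by_contra h
    push_neg at h
    exact hx ((Module.forall_dual_apply_eq_zero_iff ℂ _).mp h)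
  obtain ⟨ψ, hψ⟩ : ∃ ψ : Module.Dual ℂ D, ψ (g.hom y) ≠ 0 := by
    by_contra h
    push_neg at h
    exact hy ((Module.forall_dual_apply_eq_zero_iff ℂ _).mp h)
  intro h
  have h0 : (TensorProduct.map f.hom.hom.hom g.hom.hom.hom) (x ⊗ₜ y) = 0 := by
    have : (f ⊗ₘ g).hom.hom.hom = TensorProduct.map f.hom.hom.hom g.hom.hom.hom := rfl
    rw [← this, h]; rfl
  have h1 := congrArg
    (((TensorProduct.lid ℂ ℂ).toLinearMap.comp (TensorProduct.map φ ψ))) h0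
  rw [TensorProduct.map_tmul] at h1
  simp only [LinearMap.comp_apply, TensorProduct.map_tmul, LinearEquiv.coe_toLinearMap,
    TensorProduct.lid_tmul, map_zero] at h1
  exact mul_ne_zero hφ hψ (by simp [smul_eq_mul] at h1; exact mul_eq_zero.mpr h1)

lemma injective_of_mono {A B : FDRep ℂ G} (f : A ⟶ B) [Mono f] :
    Function.Injective f.hom := by
  haveI : Mono f.hom := (Action.forget (FGModuleCat ℂ) (MonCat.of G)).map_mono f
  exact (ModuleCat.mono_iff_injective ((forget₂ (FGModuleCat ℂ) (ModuleCat ℂ)).map f.hom)).mp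
    ((forget₂ (FGModuleCat ℂ) (ModuleCat ℂ)).map_mono f.hom)

lemma finrank_pos_of_simple (X : FDRep ℂ G) [Simple X] : 0 < finrank ℂ X := by
  have h : (𝟙 X : X ⟶ X) ≠ 0 := CategoryTheory.id_nonzero X
  rw [hom_ne_zero_iff] at h
  have : Nontrivial X := by
    by_contra hn
    rw [not_nontrivial_iff_subsingleton] at hn
    exact h (by ext x; exact @Subsingleton.elim _ hn _ _)
  exact finrank_pos

lemma finrank_dual (X : FDRep ℂ G) : finrank ℂ (Xᘁ : FDRep ℂ G) = finrank ℂ X :=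
  Subspace.dual_finrank_eq

lemma isIso_of_bijective {A B : FDRep ℂ G} (f : A ⟶ B) (h : Function.Bijective f.hom) :
    IsIso f := by
  haveI : IsIso f.hom := by
    let e : A ≃ₗ[ℂ] B := LinearEquiv.ofBijective f.hom.hom.hom h
    exact ⟨ConcreteCategory.ofHom (e.symm : B →ₗ[ℂ] A), by ext x; exact e.symm_apply_apply x,
      by ext x; exact e.apply_symm_apply x⟩
  infer_instance

instance : LeftRigidCategory (FDRep ℂ G) := BraidedCategory.leftRigidCategoryOfRightRigidCategory

/-- The dual of a simple object of `FDRep ℂ G` is simple. -/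
lemma simple_dual (X : FDRep ℂ G) [Simple X] : Simple (Xᘁ : FDRep ℂ G) := by
  constructor
  intro Y f hm
  constructor
  · intro hiso hf0
    obtain ⟨g, hg1, hg2⟩ := hiso.out
    rw [hf0, Limits.comp_zero] at hg2
    have h1 : (𝟙 (Xᘁ : FDRep ℂ G)) = 0 := hg2.symm
    have hsub : Subsingleton ((Xᘁ : FDRep ℂ G) : Type) := by
      constructor
      intro a b
      have ha : a = (Action.Hom.hom (𝟙 (Xᘁ : FDRep ℂ G))) a := rfl
      have hb : b = (Action.Hom.hom (𝟙 (Xᘁ : FDRep ℂ G))) b := rfl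
      rw [ha, hb, h1]
      rfl
    have := finrank_pos_of_simple X
    rw [← finrank_dual X] at this
    have h0 : finrank ℂ (Xᘁ : FDRep ℂ G) = 0 := finrank_zero_of_subsingleton
    omega
  · intro hf
    -- the mate `g : X ⟶ ᘁY` of `f`
    set p : Y ⊗ X ⟶ 𝟙_ (FDRep ℂ G) :=
      (tensorRightHomEquiv Y X (Xᘁ) (𝟙_ (FDRep ℂ G))).symm (f ≫ (λ_ (Xᘁ : FDRep ℂ G)).inv)
      with hp
    have hpne : p ≠ 0 := by
      intro h0
      apply comp_iso_ne_zero (λ_ (Xᘁ : FDRep ℂ G)).symm hf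
      have := congrArg (tensorRightHomEquiv Y X (Xᘁ) (𝟙_ (FDRep ℂ G))) hp
      rw [h0] at this
      rw [Equiv.apply_symm_apply] at this
      rw [show (tensorRightHomEquiv Y X (Xᘁ) (𝟙_ (FDRep ℂ G))) 0 = 0 by
        simp [tensorRightHomEquiv]] at this
      exact this.symm
    set g : X ⟶ (ᘁY : FDRep ℂ G) :=
      (tensorLeftHomEquiv X (ᘁY) Y (𝟙_ (FDRep ℂ G))) p ≫ (ρ_ ((ᘁY : FDRep ℂ G))).hom with hg
    have hgne : g ≠ 0 := by
      rw [hg]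
      intro h0
      apply hpne
      have h1 : (tensorLeftHomEquiv X (ᘁY) Y (𝟙_ (FDRep ℂ G))) p = 0 := by
        have := congrArg (· ≫ (ρ_ ((ᘁY : FDRep ℂ G))).inv) h0
        simpa using this
      have := congrArg (tensorLeftHomEquiv X (ᘁY) Y (𝟙_ (FDRep ℂ G))).symm h1
      rw [Equiv.symm_apply_apply] at this
      rw [show (tensorLeftHomEquiv X (ᘁY) Y (𝟙_ (FDRep ℂ G))).symm 0 = 0 by
        simp [tensorLeftHomEquiv]] at this
      exact this
    haveI : Mono g := mono_of_nonzero_from_simple hgne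
    have hinj_f : Function.Injective f.hom := injective_of_mono f
    have hinj_g : Function.Injective g.hom := injective_of_mono g
    have hle1 : finrank ℂ Y ≤ finrank ℂ (Xᘁ : FDRep ℂ G) :=
      LinearMap.finrank_le_finrank_of_injective hinj_f
    have hle2 : finrank ℂ X ≤ finrank ℂ ((ᘁY : FDRep ℂ G)) :=
      LinearMap.finrank_le_finrank_of_injective hinj_g
    have hYdual : finrank ℂ ((ᘁY : FDRep ℂ G)) = finrank ℂ Y := finrank_dual Y
    have heq : finrank ℂ Y = finrank ℂ (Xᘁ : FDRep ℂ G) := by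
      have := finrank_dual (G := G) X
      omega
    exact isIso_of_bijective f
      ⟨hinj_f, (LinearMap.injective_iff_surjective_of_finrank_eq_finrank heq).mp hinj_f⟩

/-- `tensorList` of an append, up to iso. -/
def tensorListAppend : (L M : List (FDRep ℂ G)) →
    (tensorList (L ++ M) ≅ tensorList L ⊗ tensorList M)
  | [], M => (λ_ (tensorList M)).symm
  | X :: L, M =>
    (whiskerLeftIso X (tensorListAppend L M)) ≪≫ (α_ X (tensorList L) (tensorList M)).symm

lemma occursIn_of_iso {D T T' : FDRep ℂ G} (h : OccursIn D T) (e : T ≅ T') : OccursIn D T' := by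
  obtain ⟨f, hf⟩ := h
  exact ⟨f ≫ e.hom, comp_iso_ne_zero e hf⟩

end ChainAux

open ChainAux Module

theorem chainRel_is_equivalence (G : Type) [Group G] [Finite G] :
    Equivalence (fun D D' : IrrRep G => ChainRel D.1 D'.1) := by
  constructor
  · -- reflexivity
    intro D
    haveI := D.2
    refine ⟨[D.1], by simp, by simpa using D.2, ?_, ?_⟩ <;>
    · refine ⟨(ρ_ D.1).inv, ?_⟩
      intro h
      apply CategoryTheory.id_nonzero D.1
      rw [← (ρ_ D.1).inv_hom_id, h]; exact Limits.zero_comp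
  · -- symmetry
    rintro D D' ⟨L, h1, h2, h3, h4⟩
    exact ⟨L, h1, h2, h4, h3⟩
  · -- transitivity
    rintro D D' D'' ⟨L, _, hLs, ⟨a, ha⟩, ⟨b, hb⟩⟩ ⟨M, _, hMs, ⟨c, hc⟩, ⟨d, hd⟩⟩
    haveI := D'.2
    set A : FDRep ℂ G := (D'.1)ᘁ with hA
    haveI hAsimple : Simple A := simple_dual D'.1
    refine ⟨L ++ A :: M, by simp, ?_, ?_, ?_⟩
    · intro X hX
      rcases List.mem_append.mp hX with h | h
      · exact hLs X h
      · rcases List.mem_cons.mp h with h | h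
        · rw [h]; exact hAsimple
        · exact hMs X h
    · -- D occurs
      apply occursIn_of_iso (T := tensorList L ⊗ tensorList (A :: M))
      swap
      · exact (tensorListAppend L (A :: M)).symm
      -- nonzero map 𝟙 ⟶ A ⊗ tensorList M
      haveI : ExactPairing A D'.1 := BraidedCategory.exactPairing_swap D'.1 A
      set u : 𝟙_ (FDRep ℂ G) ⟶ A ⊗ tensorList M :=
        (tensorLeftHomEquiv (𝟙_ (FDRep ℂ G)) A D'.1 (tensorList M)) ((ρ_ D'.1).hom ≫ c)
        with hu
      have huz : u ≠ 0 := by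
        rw [hu]
        intro h0
        have := congrArg (tensorLeftHomEquiv (𝟙_ (FDRep ℂ G)) A D'.1 (tensorList M)).symm h0
        rw [Equiv.symm_apply_apply] at this
        rw [show (tensorLeftHomEquiv (𝟙_ (FDRep ℂ G)) A D'.1 (tensorList M)).symm 0 = 0 by
          simp [tensorLeftHomEquiv]] at this
        exact iso_comp_ne_zero (ρ_ D'.1) hc this
      refine ⟨(ρ_ D.1).inv ≫ (a ⊗ₘ u), ?_⟩
      have : a ⊗ₘ u ≠ 0 := tensorHom_ne_zero ha huz
      exact iso_comp_ne_zero (ρ_ D.1).symm this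
    · -- D'' occurs
      apply occursIn_of_iso (T := (tensorList L ⊗ A) ⊗ tensorList M)
      swap
      · exact (α_ _ _ _) ≪≫ (tensorListAppend L (A :: M)).symm
      set v : 𝟙_ (FDRep ℂ G) ⟶ tensorList L ⊗ A :=
        (tensorRightHomEquiv (𝟙_ (FDRep ℂ G)) D'.1 A (tensorList L)) ((λ_ D'.1).hom ≫ b)
        with hv
      have hvz : v ≠ 0 := by
        rw [hv]
        intro h0
        have := congrArg (tensorRightHomEquiv (𝟙_ (FDRep ℂ G)) D'.1 A (tensorList L)).symm h0
        rw [Equiv.symm_apply_apply] at this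
        rw [show (tensorRightHomEquiv (𝟙_ (FDRep ℂ G)) D'.1 A (tensorList L)).symm 0 = 0 by
          simp [tensorRightHomEquiv]] at this
        exact iso_comp_ne_zero (λ_ D'.1) hb this
      refine ⟨(λ_ D''.1).inv ≫ (v ⊗ₘ d), ?_⟩
      have : v ⊗ₘ d ≠ 0 := tensorHom_ne_zero hvz hd
      exact iso_comp_ne_zero (λ_ D''.1).symm this


end
end

section
/- Let G be a finite group. The assignment η([D]) := Υ_D is a well-defined group homomorphism from the chain group 𝒞(G) to the character group Hom(Z(G), ℂˣ) of the center of G; that is, Υ_{[D₁] ⊠ [D₂]} = Υ_{D₁} · Υ_{D₂}. -/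
/-!
Statement 0: For a finite group `G`, the chain relation on irreducible
finite-dimensional complex representations of `G` — where `D ≈ D'` iff there
exist finitely many irreducible representations `D₁, …, Dₙ` such that `D` and
`D'` both occur in `D₁ ⊗ ⋯ ⊗ Dₙ` — is an equivalence relation (in particular,
transitive).
-/

open CategoryTheory MonoidalCategory

noncomputable section

variable {G : Type} [Group G]

/-- `V` has central character `χ` if every central element `c` acts in `V` as
the scalar `χ c`. -/
def HasCentralChar (V : FDRep ℂ G) (χ : Subgroup.center G →* ℂˣ) : Prop :=
  ∀ c : Subgroup.center G, V.ρ (c : G) = (χ c : ℂ) • LinearMap.id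

/-- scalar cancellation against a nonzero vector -/
lemma smul_cancel_aux {M : Type*} [AddCommGroup M] [Module ℂ M] {f : M} (hf : f ≠ 0)
    {a b : ℂ} (h : a • f = b • f) : a = b := by
  by_contra hab
  have : (a - b) • f = 0 := by rw [sub_smul, h, sub_self]
  rcases smul_eq_zero.mp this with h1 | h1
  · exact hab (sub_eq_zero.mp h1)
  · exact hf h1

lemma id_ne_zero_of_simple (D : FDRep ℂ G) (hD : Simple D) :
    (LinearMap.id : D →ₗ[ℂ] D) ≠ 0 := by
  intro h
  have : (𝟙 D : D ⟶ D) = 0 := by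
    ext x
    exact LinearMap.congr_fun h x
  exact CategoryTheory.id_nonzero D this

/-- Schur: every simple representation has a central character. -/
lemma exists_centralChar (D : FDRep ℂ G) (hD : Simple D) :
    ∃ χ : Subgroup.center G →* ℂˣ, HasCentralChar D χ := by
  have hid := id_ne_zero_of_simple D hD
  have key : ∀ c : Subgroup.center G, ∃ a : ℂ, D.ρ (c : G) = a • LinearMap.id := by
    intro c
    let E : D ⟶ D :=
      { hom := FGModuleCat.ofHom (D.ρ (c : G))
        comm := fun g => by
          apply InducedCategory.hom_ext
          apply ModuleCat.hom_ext
          show (D.ρ (c : G)).comp (D.ρ g) = (D.ρ g).comp (D.ρ (c : G))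
          rw [← Module.End.mul_eq_comp, ← Module.End.mul_eq_comp, ← map_mul, ← map_mul,
            Subgroup.mem_center_iff.mp c.2 g] }
    obtain ⟨a, ha⟩ := CategoryTheory.endomorphism_simple_eq_smul_id ℂ E
    refine ⟨a, ?_⟩
    have : ((a • 𝟙 D : D ⟶ D).hom.hom.hom : D →ₗ[ℂ] D) = (E.hom.hom.hom : D →ₗ[ℂ] D) :=
      congrArg (fun f => f.hom.hom.hom) ha
    exact this.symm
  choose μ hμ using key
  have hμ1 : μ 1 = 1 := by
    apply smul_cancel_aux hid
    rw [← hμ 1]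
    show D.ρ (1 : G) = _
    simp [map_one, Module.End.one_eq_id]
  have hμmul : ∀ c c', μ (c * c') = μ c * μ c' := by
    intro c c'
    apply smul_cancel_aux hid
    rw [← hμ (c * c')]
    show D.ρ ((c : G) * (c' : G)) = _
    rw [map_mul, hμ c, hμ c']
    ext x
    simp [smul_smul, mul_comm]
  have hμne : ∀ c, μ c ≠ 0 := by
    intro c hc
    have h1 : μ c * μ c⁻¹ = 1 := by rw [← hμmul, mul_inv_cancel, hμ1]
    rw [hc, zero_mul] at h1
    exact zero_ne_one h1
  refine ⟨{ toFun := fun c => Units.mk0 (μ c) (hμne c)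
            map_one' := by ext; simp [hμ1]
            map_mul' := fun c c' => by ext; simp [hμmul] }, ?_⟩
  intro c
  exact hμ c

lemma centralChar_unique {D T : FDRep ℂ G} {χ ψ : Subgroup.center G →* ℂˣ}
    (h : HasCentralChar D χ) (h' : HasCentralChar T ψ) (ho : OccursIn D T) : χ = ψ := by
  obtain ⟨f, hf⟩ := ho
  have hfhom : (f.hom.hom.hom : D →ₗ[ℂ] T) ≠ 0 := by
    intro h0; apply hf; ext x; exact LinearMap.congr_fun h0 x
  ext c
  have comm : (f.hom.hom.hom : D →ₗ[ℂ] T).comp (D.ρ (c : G)) = (T.ρ (c : G)).comp f.hom.hom.hom :=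
    congrArg (fun f => f.hom.hom) (f.comm (c : G))
  rw [h c, h' c] at comm
  have : (χ c : ℂ) • (f.hom.hom.hom : D →ₗ[ℂ] T) = (ψ c : ℂ) • (f.hom.hom.hom : D →ₗ[ℂ] T) := by
    ext x
    have h2 := LinearMap.congr_fun comm x
    exact (LinearMap.map_smul (f.hom.hom.hom : D →ₗ[ℂ] T) (χ c : ℂ) x).symm.trans h2
  exact smul_cancel_aux hfhom this

lemma HasCentralChar.tensor {X Y : FDRep ℂ G} {χ ψ : Subgroup.center G →* ℂˣ}
    (h : HasCentralChar X χ) (h' : HasCentralChar Y ψ) :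
    HasCentralChar (X ⊗ Y) (χ * ψ) := by
  intro c
  show TensorProduct.map (X.ρ (c : G)) (Y.ρ (c : G)) = _
  rw [h c, h' c]
  ext x y
  simp [TensorProduct.smul_tmul', TensorProduct.tmul_smul, smul_smul, mul_comm]
  rw [TensorProduct.smul_tmul']

lemma hasCentralChar_unit : HasCentralChar (𝟙_ (FDRep ℂ G)) 1 := by
  intro c
  refine LinearMap.ext fun x => ?_
  show x = _
  simp

lemma tensorList_centralChar (L : List (FDRep ℂ G)) (h : ∀ X ∈ L, Simple X) :
    ∃ χ, HasCentralChar (tensorList L) χ := by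
  induction L with
  | nil => exact ⟨1, hasCentralChar_unit⟩
  | cons X L ih =>
    obtain ⟨ψ, hψ⟩ := ih (fun Y hY => h Y (List.mem_cons_of_mem X hY))
    obtain ⟨χ, hχ⟩ := exists_centralChar X (h X (List.mem_cons_self))
    exact ⟨χ * ψ, hχ.tensor hψ⟩

/-- The assignment `η([D]) := Υ_D` is a well-defined group homomorphism from
the chain group `𝒞(G)` to the character group of the center of `G`:
(a) chain-equivalent irreducible representations have equal central characters
(well-definedness), and (b) `Υ_{[D₁] ⊠ [D₂]} = Υ_{D₁} · Υ_{D₂}`, i.e. any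
irreducible constituent `D` of `D₁ ⊗ D₂` has central character
`Υ_{D₁} · Υ_{D₂}` (pointwise product of homomorphisms `Z(G) →* ℂˣ`). -/
theorem centralChar_chainGroup_hom (G : Type) [Group G] [Finite G] :
    (∀ (D D' : FDRep ℂ G), Simple D → Simple D' →
      ∀ (χ χ' : Subgroup.center G →* ℂˣ),
        HasCentralChar D χ → HasCentralChar D' χ' → ChainRel D D' → χ = χ') ∧
    (∀ (D₁ D₂ D : FDRep ℂ G), Simple D₁ → Simple D₂ → Simple D →
      ∀ (χ₁ χ₂ : Subgroup.center G →* ℂˣ),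
        HasCentralChar D₁ χ₁ → HasCentralChar D₂ χ₂ →
        OccursIn D (D₁ ⊗ D₂) → HasCentralChar D (χ₁ * χ₂)) := by
  constructor
  · rintro D D' _ _ χ χ' hχ hχ' ⟨L, -, hL, hD, hD'⟩
    obtain ⟨ψ, hψ⟩ := tensorList_centralChar L hL
    rw [centralChar_unique hχ hψ hD, centralChar_unique hχ' hψ hD']
  · intro D₁ D₂ D h₁ h₂ hD χ₁ χ₂ hχ₁ hχ₂ hocc
    obtain ⟨χ, hχ⟩ := exists_centralChar D hD
    rw [← centralChar_unique hχ (hχ₁.tensor hχ₂) hocc]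
    exact hχ


end
end
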